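/- Let R be a commutative ring, S a multiplicatively closed subset, and M an R-module. If N is an S-second submodule of M, then there exists a fixed s ∈ S such that whenever abN ⊆ K for a, b ∈ R and a submodule K of M, then sa ∈ Ann_R(N) or sb ∈ Ann_R(N) or sN ⊆ K. -/

import Mathlib

open Pointwise

/-- `S` is a multiplicatively closed subset of `R`: `0 ∉ S`, `1 ∈ S`, closed under products. -/
def IsMCS {R : Type*} [CommRing R] (S : Set R) : Prop :=
  (0 : R) ∉ S ∧ (1 : R) ∈ S ∧ ∀ s ∈ S, ∀ t ∈ S, s * t ∈ S

/-- `N` is an `S`-2-absorbing submodule of `M`. -/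
def IsS2AbsorbingSubmodule {R M : Type*} [CommRing R] [AddCommGroup M] [Module R M]
    (S : Set R) (N : Submodule R M) : Prop :=
  (∀ s ∈ S, s ∉ N.colon ⊤) ∧
  ∃ s ∈ S, ∀ a b : R, ∀ m : M, (a * b) • m ∈ N →
    s * (a * b) ∈ N.colon ⊤ ∨ (s * a) • m ∈ N ∨ (s * b) • m ∈ N

/-- `I` is an `S`-2-absorbing ideal of `R`. -/
def IsS2AbsorbingIdeal {R : Type*} [CommRing R] (S : Set R) (I : Ideal R) : Prop :=
  (∀ s ∈ S, s ∉ I) ∧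
  ∃ s ∈ S, ∀ a b c : R, a * b * c ∈ I →
    s * (a * b) ∈ I ∨ s * (a * c) ∈ I ∨ s * (b * c) ∈ I

/-- `N` is an `S`-2-absorbing second submodule of `M`. -/
def IsS2AbsorbingSecond {R M : Type*} [CommRing R] [AddCommGroup M] [Module R M]
    (S : Set R) (N : Submodule R M) : Prop :=
  (∀ s ∈ S, s ∉ N.annihilator) ∧
  ∃ s ∈ S, ∀ a b : R, ∀ K : Submodule R M, (a * b) • N ≤ K →
    (s * a) • N ≤ K ∨ (s * b) • N ≤ K ∨ (s * (a * b)) • N = ⊥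

/-- `N` is an `S`-second submodule of `M`. -/
def IsSSecond {R M : Type*} [CommRing R] [AddCommGroup M] [Module R M]
    (S : Set R) (N : Submodule R M) : Prop :=
  (∀ s ∈ S, s ∉ N.annihilator) ∧
  ∃ s ∈ S, ∀ r : R, ∀ K : Submodule R M, r • N ≤ K →
    (r * s) • N = ⊥ ∨ s • N ≤ K

/-- `N` is a strongly 2-absorbing second submodule of `M`. -/
def IsStrongly2AbsorbingSecond {R M : Type*} [CommRing R] [AddCommGroup M] [Module R M]
    (N : Submodule R M) : Prop :=
  N ≠ ⊥ ∧ ∀ a b : R, ∀ K : Submodule R M, (a * b) • N ≤ K →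
    a • N ≤ K ∨ b • N ≤ K ∨ (a * b) • N = ⊥


theorem pw_smul_le_iff {R M : Type*} [CommRing R] [AddCommGroup M] [Module R M] (r : R) (N K : Submodule R M) :
    r • N ≤ K ↔ ∀ n ∈ N, r • n ∈ K := by
  constructor
  · intro h n hn; exact h (Submodule.smul_mem_pointwise_smul n r N hn)
  · intro h m hm
    rw [← SetLike.mem_coe, Submodule.coe_pointwise_smul] at hm
    obtain ⟨n, hn, rfl⟩ := hm
    exact h n hn

theorem pw_smul_eq_bot_iff {R M : Type*} [CommRing R] [AddCommGroup M] [Module R M] (r : R) (N : Submodule R M) :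
    r • N = ⊥ ↔ r ∈ N.annihilator := by
  rw [eq_bot_iff, pw_smul_le_iff, Submodule.mem_annihilator]
  simp [Submodule.mem_bot]

theorem stmt15 {R M : Type*} [CommRing R] [AddCommGroup M] [Module R M]
    (S : Set R) (hS : IsMCS S) (N : Submodule R M)
    (hN : IsSSecond S N) :
    ∃ s ∈ S, ∀ a b : R, ∀ K : Submodule R M, (a * b) • N ≤ K →
      s * a ∈ N.annihilator ∨ s * b ∈ N.annihilator ∨ s • N ≤ K := by
  obtain ⟨hann, s, hsS, hs⟩ := hN
  have hss : s • N ≤ (s * s) • N := by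
    rcases hs (s * s) ((s * s) • N) le_rfl with h | h
    · exact absurd ((pw_smul_eq_bot_iff _ _).mp h)
        (hann _ (hS.2.2 _ (hS.2.2 _ hsS _ hsS) _ hsS))
    · exact h
  refine ⟨s, hsS, fun a b K hab => ?_⟩
  set K' : Submodule R M := K.comap (DistribMulAction.toLinearMap R M a) with hK'
  have hbK' : b • N ≤ K' := by
    rw [pw_smul_le_iff]
    intro n hn
    have : (b * a) • n ∈ K := by
      rw [mul_comm]; exact (pw_smul_le_iff _ _ _).mp hab n hn
    exact Submodule.mem_comap.mpr (by change a • b • n ∈ K; rwa [← mul_smul, mul_comm])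
  rcases hs b K' hbK' with h | h
  · right; left
    rw [Submodule.mem_annihilator]
    intro n hn
    have := (pw_smul_eq_bot_iff _ _).mp h
    rw [Submodule.mem_annihilator] at this
    simpa [mul_comm] using this n hn
  · have hasK : (a * s) • N ≤ K := by
      rw [pw_smul_le_iff]
      intro n hn
      have := (pw_smul_le_iff _ _ _).mp h n hn
      rw [mul_smul]
      exact this
    rcases hs (a * s) K hasK with h2 | h2
    · left
      rw [Submodule.mem_annihilator]
      intro n hn
      have hsn : s • n ∈ (s * s) • N := hss (Submodule.smul_mem_pointwise_smul n s N hn)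
      rw [← SetLike.mem_coe, Submodule.coe_pointwise_smul] at hsn
      obtain ⟨m, hm, hmeq⟩ := hsn
      have hmeq' : (s * s) • m = s • n := hmeq
      have h2' := (pw_smul_eq_bot_iff _ _).mp h2
      rw [Submodule.mem_annihilator] at h2'
      have hz : (a * s * s) • m = 0 := h2' m hm
      calc (s * a) • n = a • (s • n) := by rw [mul_comm, mul_smul]
        _ = a • ((s * s) • m) := by rw [hmeq']
        _ = (a * s * s) • m := by rw [← mul_smul, ← mul_assoc]
        _ = 0 := hz
    · right; right; exact h2
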